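/- If f : X → Y is an open continuous surjection, then the image under f of every semi-open subset of X is semi-open in Y. -/

import Mathlib

open Set Topology

def SemiOpen {X : Type*} [TopologicalSpace X] (A : Set X) : Prop :=
  A ⊆ closure (interior A)

def SemiClosed {X : Type*} [TopologicalSpace X] (A : Set X) : Prop :=
  interior (closure A) ⊆ A

def scl {X : Type*} [TopologicalSpace X] (A : Set X) : Set X :=
  ⋂₀ {S | SemiClosed S ∧ A ⊆ S}

def sker {X : Type*} [TopologicalSpace X] (A : Set X) : Set X :=
  ⋂₀ {S | SemiOpen S ∧ A ⊆ S}

def sint {X : Type*} [TopologicalSpace X] (A : Set X) : Set X :=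
  ⋃₀ {S | SemiOpen S ∧ S ⊆ A}

def SgOpen {X : Type*} [TopologicalSpace X] (A : Set X) : Prop :=
  ∀ F : Set X, SemiClosed F → F ⊆ A → F ⊆ sint A

def SgClosed {X : Type*} [TopologicalSpace X] (A : Set X) : Prop :=
  scl A ⊆ sker A

def HSgClosed {X : Type*} [TopologicalSpace X] (A : Set X) : Prop :=
  ∀ B : Set X, B ⊆ A → SgClosed B

def SgCompact (X : Type*) [TopologicalSpace X] : Prop :=
  ∀ 𝒰 : Set (Set X), (∀ U ∈ 𝒰, SgOpen U) → ⋃₀ 𝒰 = Set.univ →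
    ∃ F ⊆ 𝒰, F.Finite ∧ ⋃₀ F = Set.univ

def LocallyIndiscrete (X : Type*) [TopologicalSpace X] : Prop :=
  ∀ U : Set X, IsOpen U → IsClosed U

def IndiscreteSpace (X : Type*) [TopologicalSpace X] : Prop :=
  ∀ U : Set X, IsOpen U → U = ∅ ∨ U = Set.univ

theorem stmt_2 {X Y : Type*} [TopologicalSpace X] [TopologicalSpace Y] (f : X → Y)
    (hopen : IsOpenMap f) (hcont : Continuous f) (hsurj : Function.Surjective f)
    (A : Set X) (hA : SemiOpen A) : SemiOpen (f '' A) := by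
  intro y hy
  obtain ⟨x, hx, rfl⟩ := hy
  have h1 : f x ∈ f '' closure (interior A) := ⟨x, hA hx, rfl⟩
  have h2 : f '' closure (interior A) ⊆ closure (f '' interior A) :=
    image_closure_subset_closure_image hcont
  exact closure_mono (interior_maximal (image_mono (f := f) interior_subset)
    (hopen _ isOpen_interior)) (h2 h1)
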